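/- Let f ∈ L²(V, μ). If ∫_V f dμ = 0, then g = −f/σ is the unique element of L²(V, μ) satisfying L g = f and ∫_V g dμ = 0. Conversely, if there exists g ∈ L¹(V, μ) with L g = f μ-a.e., then ∫_V f dμ = 0. -/

import Mathlib

open MeasureTheory Metric

/-- The surface measure on the sphere of radius `r` centered at the origin of `ℝ^d`,
realized as the `(d-1)`-dimensional Hausdorff measure restricted to the sphere. -/
noncomputable def sphereMeasure (d : ℕ) (r : ℝ) :
    Measure (EuclideanSpace ℝ (Fin d)) :=
  (μH[(d : ℝ) - 1]).restrict (sphere (0 : EuclideanSpace ℝ (Fin d)) r)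

/-- The relaxation (turning) operator `L g = σ (M ∫ g dμ − g)` with `M = 1/μ(V)`. -/
noncomputable def relaxationOp (d : ℕ) (r : ℝ) (σ : ℝ)
    (g : EuclideanSpace ℝ (Fin d) → ℝ) : EuclideanSpace ℝ (Fin d) → ℝ :=
  fun v => σ * ((sphereMeasure d r Set.univ).toReal⁻¹ *
    (∫ w, g w ∂(sphereMeasure d r)) - g v)

section Aux
open Set

local notation "E" n => EuclideanSpace ℝ (Fin n)

lemma norm_sq_eq {n : ℕ} (v : E n) : ‖v‖ ^ 2 = ∑ j, (v j) ^ 2 := by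
  rw [EuclideanSpace.norm_eq, Real.sq_sqrt (by positivity)]
  simp [sq_abs]

lemma coord_sq_le {n : ℕ} (v : E n) (j : Fin n) : (v j) ^ 2 ≤ ‖v‖ ^ 2 := by
  rw [norm_sq_eq]
  exact Finset.single_le_sum (f := fun j => (v j)^2) (fun k _ => sq_nonneg _) (Finset.mem_univ j)

lemma cap_lt_top (n : ℕ) (r c s : ℝ) (hc : 0 < c) (hs : s = 1 ∨ s = -1) (i : Fin (n + 1)) :
    μH[(n : ℝ)] {x : E (n+1) | ‖x‖ = r ∧ c ≤ s * x i} < ⊤ := by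
  classical
  have hs2 : s ^ 2 = 1 := by rcases hs with rfl | rfl <;> norm_num
  set A : Set (E (n+1)) := {x | ‖x‖ = r ∧ c ≤ s * x i} with hA
  rcases eq_empty_or_nonempty A with h | ⟨x₀, hx₀⟩
  · simp [h]
  have hr : 0 < r := by
    have h1 : c ≤ s * x₀ i := hx₀.2
    have h2 : (x₀ i) ^ 2 ≤ ‖x₀‖ ^ 2 := coord_sq_le _ _
    have h3 := hx₀.1
    nlinarith [norm_nonneg x₀]
  set q : (E (n+1)) → E n := fun x => WithLp.toLp 2 (fun k => x (i.succAbove k) : Fin n → ℝ) with hq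
  have hq_normsq : ∀ x : E (n+1), ‖x‖ ^ 2 = (x i) ^ 2 + ‖q x‖ ^ 2 := by
    intro x
    rw [norm_sq_eq, norm_sq_eq, Fin.sum_univ_succAbove (fun j => (x j) ^ 2) i] <;> rfl
  have hq_le : ∀ x : E (n+1), ‖x‖ = r → ‖q x‖ ≤ r := by
    intro x hx
    have := hq_normsq x
    nlinarith [norm_nonneg (q x), sq_nonneg (x i)]
  set F : A → E n := fun x => q x.1 with hF
  set K : NNReal := Real.toNNReal (Real.sqrt (1 + (r/c)^2)) with hK
  have hFanti : AntilipschitzWith K F := by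
    apply AntilipschitzWith.of_le_mul_dist
    rintro ⟨x, hxr, hxs⟩ ⟨y, hyr, hys⟩
    simp only [Subtype.dist_eq, hF]
    have hinner : (x i)^2 - (y i)^2 = inner ℝ (q y - q x) (q y + q x : E n) := by
      have h1 := hq_normsq x
      have h2 := hq_normsq y
      have h0 : inner ℝ (q y - q x) (q y + q x : E n) = ‖q y‖^2 - ‖q x‖^2 := by
        rw [inner_sub_left, inner_add_right, inner_add_right,
          real_inner_self_eq_norm_sq, real_inner_self_eq_norm_sq, real_inner_comm]
        ring
      rw [h0]; nlinarith
    have hCS : |(x i)^2 - (y i)^2| ≤ ‖q y - q x‖ * (2 * r) := by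
      rw [hinner]
      calc |inner ℝ (q y - q x) (q y + q x : E n)| ≤ ‖q y - q x‖ * ‖q y + q x‖ :=
            abs_real_inner_le_norm _ _
        _ ≤ ‖q y - q x‖ * (2 * r) := by
            have h1 := norm_add_le (q y) (q x)
            have h2 := norm_nonneg (q y - q x)
            have h3 := hq_le x hxr
            have h4 := hq_le y hyr
            nlinarith
    have h2c : 2 * c ≤ s * (x i + y i) := by rw [mul_add]; linarith
    have h1 : (x i - y i)^2 * (2*c)^2 ≤ (x i - y i)^2 * (s * (x i + y i))^2 := by
      refine mul_le_mul_of_nonneg_left ?_ (sq_nonneg _)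
      exact pow_le_pow_left₀ (by positivity) h2c 2
    have h2 : (x i - y i)^2 * (s * (x i + y i))^2 = ((x i)^2 - (y i)^2)^2 := by
      calc (x i - y i)^2 * (s * (x i + y i))^2
          = s^2 * ((x i - y i) * (x i + y i))^2 := by ring
        _ = ((x i)^2 - (y i)^2)^2 := by rw [hs2]; ring
    have h3 : ((x i)^2 - (y i)^2)^2 ≤ (‖q y - q x‖ * (2 * r))^2 := by
      have h := pow_le_pow_left₀ (abs_nonneg ((x i)^2 - (y i)^2)) hCS 2
      rwa [sq_abs] at h
    have key : (x i - y i)^2 * (4*c^2) ≤ ‖q y - q x‖^2 * (4*r^2) := by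
      calc (x i - y i)^2 * (4*c^2) = (x i - y i)^2 * (2*c)^2 := by ring
        _ ≤ (x i - y i)^2 * (s * (x i + y i))^2 := h1
        _ = ((x i)^2 - (y i)^2)^2 := h2
        _ ≤ (‖q y - q x‖ * (2*r))^2 := h3
        _ = ‖q y - q x‖^2 * (4*r^2) := by ring
    have hdist : dist x y ^ 2 = (x i - y i)^2 + dist (q x) (q y) ^ 2 := by
      rw [dist_eq_norm, dist_eq_norm, hq_normsq (x - y)]
      have e1 : (x - y : E (n+1)) i = x i - y i := rfl
      have e2 : q (x - y) = q x - q y := by ext k; rfl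
      rw [e1, e2]
    have hsq : dist x y ^ 2 ≤ (1 + (r/c)^2) * dist (q x) (q y) ^ 2 := by
      have hnorm : ‖q y - q x‖ = dist (q x) (q y) := by
        rw [dist_eq_norm, norm_sub_rev]
      rw [hnorm] at key
      have hc2 : (0:ℝ) < c^2 := by positivity
      have hco : (x i - y i)^2 ≤ (r/c)^2 * dist (q x) (q y)^2 := by
        rw [div_pow]
        rw [← sub_nonneg]
        have e : r^2/c^2 * dist (q x) (q y)^2 - (x i - y i)^2
            = (dist (q x) (q y)^2 * (4*r^2) - (x i - y i)^2 * (4*c^2)) / (4*c^2) := by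
          field_simp
        rw [e]
        have : (0:ℝ) ≤ dist (q x) (q y)^2 * (4*r^2) - (x i - y i)^2 * (4*c^2) := by linarith
        positivity
      rw [hdist]; linarith
    have hfin : dist x y ≤ Real.sqrt (1 + (r/c)^2) * dist (q x) (q y) := by
      have h0 : (0:ℝ) ≤ dist (q x) (q y) := dist_nonneg
      have h := Real.sqrt_le_sqrt hsq
      rwa [Real.sqrt_sq dist_nonneg, Real.sqrt_mul (by positivity), Real.sqrt_sq h0] at h
    rw [hK]
    rw [Real.coe_toNNReal _ (Real.sqrt_nonneg _)]
    exact hfin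
  have hmA : μH[(n : ℝ)] A = μH[(n : ℝ)] (univ : Set A) := by
    have himg : (Subtype.val '' (univ : Set A)) = A := by simp
    have h := isometry_subtype_coe.hausdorffMeasure_image
      (Or.inl (Nat.cast_nonneg n) : 0 ≤ (n:ℝ) ∨ Function.Surjective (Subtype.val : A → _))
      (univ : Set A)
    rw [himg] at h
    exact h
  have hsub : F '' univ ⊆ closedBall (0 : E n) r := by
    rintro _ ⟨⟨x, hx⟩, -, rfl⟩
    simpa [mem_closedBall, dist_zero_right] using hq_le x hx.1
  haveI : (μH[(n : ℝ)] : Measure (E n)).IsAddHaarMeasure := by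
    have h := @isAddHaarMeasure_hausdorffMeasure (EuclideanSpace ℝ (Fin n)) _ _ _ _ _
    rwa [finrank_euclideanSpace_fin] at h
  have h4 : μH[(n : ℝ)] (closedBall (0 : E n) r) < ⊤ := (isCompact_closedBall _ _).measure_lt_top
  calc μH[(n : ℝ)] A = μH[(n : ℝ)] (univ : Set A) := hmA
    _ ≤ (K : ENNReal) ^ (n:ℝ) * μH[(n : ℝ)] (F '' univ) :=
        hFanti.le_hausdorffMeasure_image (Nat.cast_nonneg n) univ
    _ ≤ (K : ENNReal) ^ (n:ℝ) * μH[(n : ℝ)] (closedBall (0 : E n) r) :=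
        mul_le_mul_right (measure_mono hsub) _
    _ < ⊤ := ENNReal.mul_lt_top
        (ENNReal.rpow_lt_top_of_nonneg (Nat.cast_nonneg n) ENNReal.coe_ne_top) h4


lemma sphere_hausdorff_lt_top (n : ℕ) (r : ℝ) (hr : 0 < r) :
    μH[(n : ℝ)] (sphere (0 : EuclideanSpace ℝ (Fin (n+1))) r) < ⊤ := by
  classical
  set c : ℝ := r / Real.sqrt (n+1) with hcdef
  have hc : 0 < c := div_pos hr (Real.sqrt_pos.mpr (by positivity))
  have hcover : sphere (0 : EuclideanSpace ℝ (Fin (n+1))) r ⊆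
      ⋃ p : Fin (n+1) × Bool,
        {x : EuclideanSpace ℝ (Fin (n+1)) | ‖x‖ = r ∧ c ≤ (if p.2 then 1 else -1) * x p.1} := by
    intro x hx
    have hxn : ‖x‖ = r := mem_sphere_zero_iff_norm.mp hx
    have hsum : ∑ j, (x j)^2 = r^2 := by rw [← norm_sq_eq, hxn]
    have hex : ∃ j, r^2/(n+1) ≤ (x j)^2 := by
      by_contra h
      push_neg at h
      have hlt := Finset.sum_lt_sum_of_nonempty Finset.univ_nonempty
        (f := fun j : Fin (n+1) => (x j)^2) (fun j _ => h j)
      rw [hsum, Finset.sum_const, Finset.card_univ, Fintype.card_fin, nsmul_eq_mul] at hlt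
      have : ((n+1 : ℕ) : ℝ) * (r^2/(n+1)) = r^2 := by
        have hn : ((n:ℝ)+1) ≠ 0 := by positivity
        push_cast
        field_simp
      rw [this] at hlt
      exact lt_irrefl _ hlt
    obtain ⟨j, hj⟩ := hex
    have hcj : c ≤ |x j| := by
      have h1 : c^2 = r^2/(n+1) := by
        rw [hcdef, div_pow, Real.sq_sqrt (by positivity)]
      calc c = Real.sqrt (c^2) := (Real.sqrt_sq hc.le).symm
        _ ≤ Real.sqrt ((x j)^2) := Real.sqrt_le_sqrt (by rw [h1]; exact hj)
        _ = |x j| := Real.sqrt_sq_eq_abs _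
    refine Set.mem_iUnion.mpr ⟨(j, decide (0 ≤ x j)), hxn, ?_⟩
    by_cases h : 0 ≤ x j
    · rw [abs_of_nonneg h] at hcj
      simp [h, hcj]
    · rw [abs_of_neg (lt_of_not_ge h)] at hcj
      have hd : decide (0 ≤ x j) = false := decide_eq_false h
      rw [hd]
      simp only [Bool.false_eq_true, if_false]
      linarith
  calc μH[(n : ℝ)] (sphere (0 : EuclideanSpace ℝ (Fin (n+1))) r)
      ≤ μH[(n : ℝ)] (⋃ p : Fin (n+1) × Bool,
        {x : EuclideanSpace ℝ (Fin (n+1)) | ‖x‖ = r ∧ c ≤ (if p.2 then 1 else -1) * x p.1}) :=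
        measure_mono hcover
    _ ≤ ∑' p : Fin (n+1) × Bool, μH[(n : ℝ)]
        {x : EuclideanSpace ℝ (Fin (n+1)) | ‖x‖ = r ∧ c ≤ (if p.2 then 1 else -1) * x p.1} :=
        measure_iUnion_le _
    _ < ⊤ := by
        rw [tsum_fintype]
        refine ENNReal.sum_lt_top.mpr fun p _ => ?_
        exact cap_lt_top n r c _ hc (by cases p.2 <;> simp) p.1

end Aux

lemma sphereMeasure_finite (d : ℕ) (hd : 1 ≤ d) (r : ℝ) (hr : 0 < r) :
    IsFiniteMeasure (sphereMeasure d r) := by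
  obtain ⟨n, rfl⟩ : ∃ n, d = n + 1 := ⟨d - 1, by omega⟩
  refine ⟨?_⟩
  rw [sphereMeasure, Measure.restrict_apply_univ]
  have h : ((n + 1 : ℕ) : ℝ) - 1 = (n : ℝ) := by push_cast; ring
  rw [h]
  exact sphere_hausdorff_lt_top n r hr

/-- if `∫ f dμ = 0` then `g = −f/σ` is the unique mean-zero `L²` solution of
`L g = f`; conversely, if `L g = f` a.e. for some `g ∈ L¹`, then `∫ f dμ = 0`. -/
theorem relaxation_solvability (d : ℕ) (hd : 2 ≤ d) (r : ℝ) (hr : 0 < r)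
    (σ : ℝ) (hσ : 0 < σ) (f : EuclideanSpace ℝ (Fin d) → ℝ)
    (hf : MemLp f 2 (sphereMeasure d r)) :
    ((∫ v, f v ∂(sphereMeasure d r)) = 0 →
      relaxationOp d r σ (fun v => -f v / σ) = f ∧
      (∫ v, -f v / σ ∂(sphereMeasure d r)) = 0 ∧
      MemLp (fun v => -f v / σ) 2 (sphereMeasure d r) ∧
      ∀ g : EuclideanSpace ℝ (Fin d) → ℝ, MemLp g 2 (sphereMeasure d r) →
        relaxationOp d r σ g =ᵐ[sphereMeasure d r] f →
        (∫ v, g v ∂(sphereMeasure d r)) = 0 →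
        g =ᵐ[sphereMeasure d r] fun v => -f v / σ) ∧
    (∀ g : EuclideanSpace ℝ (Fin d) → ℝ, Integrable g (sphereMeasure d r) →
      relaxationOp d r σ g =ᵐ[sphereMeasure d r] f →
      (∫ v, f v ∂(sphereMeasure d r)) = 0) := by
  haveI : IsFiniteMeasure (sphereMeasure d r) := sphereMeasure_finite d (by omega) r hr
  constructor
  · intro hf0
    have heq : (fun v : EuclideanSpace ℝ (Fin d) => -f v / σ) = fun v => (-1/σ) * f v := by
      funext v; ring
    have hint0 : (∫ v, -f v / σ ∂(sphereMeasure d r)) = 0 := by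
      rw [heq, integral_const_mul, hf0, mul_zero]
    refine ⟨?_, hint0, ?_, ?_⟩
    · funext v
      simp only [relaxationOp, hint0, mul_zero, sub_neg_eq_add, zero_add]
      field_simp
      ring
    · rw [heq]; exact hf.const_mul _
    · intro g hg hLg hg0
      filter_upwards [hLg] with v hv
      simp only [relaxationOp, hg0, mul_zero, zero_sub, mul_neg] at hv
      field_simp
      linarith
  · intro g hgInt hLg
    by_cases h0 : sphereMeasure d r Set.univ = 0
    · have hz : sphereMeasure d r = 0 := Measure.measure_univ_eq_zero.mp h0
      simp [hz]
    · set μ := sphereMeasure d r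
      set I := ∫ v, g v ∂μ with hI
      have htR : (μ Set.univ).toReal ≠ 0 :=
        ENNReal.toReal_ne_zero.mpr ⟨h0, measure_ne_top μ _⟩
      have hfun : relaxationOp d r σ g
          = fun v => σ * ((μ Set.univ).toReal⁻¹ * I) - σ * g v := by
        funext v; simp only [relaxationOp]; ring
      have hRInt : Integrable (relaxationOp d r σ g) μ := by
        rw [hfun]
        exact (integrable_const _).sub (hgInt.const_mul σ)
      have h1 : (∫ v, f v ∂μ) = ∫ v, relaxationOp d r σ g v ∂μ :=
        (integral_congr_ae hLg).symm
      rw [h1, hfun, integral_sub (integrable_const _) (hgInt.const_mul σ),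
        integral_const, integral_const_mul, smul_eq_mul]
      field_simp
      rw [hI]; simp only [Measure.real]; ring
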